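/- The function $\arccos(1-2z)$ has the power series expansion $\arccos(1-2z) = \sum_{r \in 2\mathbb{N}+1} 2 \frac{((r-2)!!)^2}{r!} z^{r/2}$ valid for $z \in [0,1]$, where the sum is over odd integers $r \geq 1$ and $(-1)!! = 1$. -/

import Mathlib

open Real Nat

namespace ArccosSeriesAux

/-- The normalized central binomial coefficient `(2n choose n) / 4^n`. -/
noncomputable def ab (n : ℕ) : ℝ := (Nat.centralBinom n : ℝ) / 4 ^ n

lemma centralBinom_le_four_pow (n : ℕ) : Nat.centralBinom n ≤ 4 ^ n := by
  induction n with
  | zero => simp [Nat.centralBinom]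
  | succ n ih =>
    have h := Nat.succ_mul_centralBinom_succ n
    have h2 : (n + 1) * Nat.centralBinom (n + 1) ≤ (n + 1) * (4 * Nat.centralBinom n) := by
      rw [h]; nlinarith [Nat.centralBinom_pos n]
    have h3 := Nat.le_of_mul_le_mul_left h2 (Nat.succ_pos n)
    calc Nat.centralBinom (n + 1) ≤ 4 * Nat.centralBinom n := h3
      _ ≤ 4 * 4 ^ n := Nat.mul_le_mul_left 4 ih
      _ = 4 ^ (n + 1) := by ring

lemma ab_pos (n : ℕ) : 0 < ab n :=
  div_pos (by exact_mod_cast Nat.centralBinom_pos n) (by positivity)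

lemma ab_le_one (n : ℕ) : ab n ≤ 1 := by
  rw [ab, div_le_one (by positivity)]
  exact_mod_cast centralBinom_le_four_pow n

lemma ab_rec (n : ℕ) : 2 * ((n : ℝ) + 1) * ab (n + 1) = (2 * n + 1) * ab n := by
  have h : ((n : ℝ) + 1) * (Nat.centralBinom (n + 1) : ℝ)
      = 2 * (2 * (n : ℝ) + 1) * (Nat.centralBinom n : ℝ) := by
    exact_mod_cast Nat.succ_mul_centralBinom_succ n
  rw [ab, ab]
  have h4 : ((4 : ℝ) ^ (n + 1)) = 4 * 4 ^ n := by ring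
  rw [h4]
  have h40 : (4 : ℝ) ^ n ≠ 0 := by positivity
  field_simp
  linear_combination 2 * h

end ArccosSeriesAux

open ArccosSeriesAux

section Binomial

lemma summable_ab_pow {w r : ℝ} (hr0 : 0 ≤ r) (hr1 : r < 1) (hw : |w| ≤ r) :
    Summable (fun n : ℕ => ab n * w ^ n) := by
  refine Summable.of_norm_bounded
    (summable_geometric_of_lt_one hr0 hr1) (fun n => ?_)
  rw [norm_mul, norm_pow]
  calc ‖ab n‖ * ‖w‖ ^ n ≤ 1 * r ^ n := by
        apply mul_le_mul
        · rw [Real.norm_eq_abs, abs_of_pos (ab_pos n)]; exact ab_le_one n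
        · exact pow_le_pow_left₀ (norm_nonneg w) hw n
        · positivity
        · norm_num
    _ = r ^ n := one_mul _

lemma summable_ab_deriv {w r : ℝ} (hr0 : 0 < r) (hr1 : r < 1) (hw : |w| ≤ r) :
    Summable (fun n : ℕ => (n : ℝ) * w ^ (n - 1)) := by
  have hw1 : ‖w‖ < 1 := lt_of_le_of_lt (by rwa [Real.norm_eq_abs]) hr1
  have h : Summable (fun n : ℕ => (n : ℝ) ^ 1 * w ^ n) :=
    summable_pow_mul_geometric_of_norm_lt_one 1 hw1
  rcases eq_or_lt_of_le (abs_nonneg w) with h0 | h0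
  · have hw0 : w = 0 := abs_eq_zero.mp h0.symm
    apply summable_of_ne_finset_zero (s := {0, 1})
    intro n hn
    have hn1 : n - 1 ≠ 0 := by
      simp only [Finset.mem_insert, Finset.mem_singleton] at hn
      omega
    simp [hw0, zero_pow hn1]
  · have hwne : w ≠ 0 := by simpa [abs_eq_zero] using h0.ne'
    have heq : (fun n : ℕ => (n : ℝ) * w ^ (n - 1))
        = fun n : ℕ => w⁻¹ * ((n : ℝ) ^ 1 * w ^ n) := by
      funext n
      cases n with
      | zero => simp
      | succ m =>
        simp only [Nat.add_sub_cancel, pow_one, pow_succ]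
        field_simp
    rw [heq]
    exact h.mul_left _

lemma hasDerivAt_ab_tsum {r : ℝ} (hr0 : 0 < r) (hr1 : r < 1) {w : ℝ}
    (hw : w ∈ Set.Ioo (-r) r) :
    HasDerivAt (fun y => ∑' n : ℕ, ab n * y ^ n)
      (∑' n : ℕ, ab n * ((n : ℝ) * w ^ (n - 1))) w := by
  have habs : ∀ y ∈ Set.Ioo (-r) r, |y| ≤ r := fun y hy => abs_le.mpr ⟨hy.1.le, hy.2.le⟩
  have hmem : (0 : ℝ) ∈ Set.Ioo (-r) r := ⟨by linarith, hr0⟩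
  have hu : Summable (fun n : ℕ => (n : ℝ) * r ^ (n - 1)) :=
    summable_ab_deriv hr0 hr1 (le_of_eq (abs_of_pos hr0))
  have hg : ∀ (n : ℕ) (y : ℝ), y ∈ Set.Ioo (-r) r →
      HasDerivAt (fun y : ℝ => ab n * y ^ n) (ab n * ((n : ℝ) * y ^ (n - 1))) y :=
    fun n y _ => (hasDerivAt_pow n y).const_mul (ab n)
  have hg' : ∀ (n : ℕ) (y : ℝ), y ∈ Set.Ioo (-r) r →
      ‖ab n * ((n : ℝ) * y ^ (n - 1))‖ ≤ (n : ℝ) * r ^ (n - 1) := by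
    intro n y hy
    rw [Real.norm_eq_abs, abs_mul, abs_mul, abs_of_pos (ab_pos n),
      abs_of_nonneg (Nat.cast_nonneg n : (0 : ℝ) ≤ n), abs_pow]
    calc ab n * ((n : ℝ) * |y| ^ (n - 1)) ≤ 1 * ((n : ℝ) * r ^ (n - 1)) := by
          apply mul_le_mul (ab_le_one n) _ (by positivity) (by norm_num)
          exact mul_le_mul_of_nonneg_left
            (pow_le_pow_left₀ (abs_nonneg y) (habs y hy) _) (Nat.cast_nonneg n)
      _ = (n : ℝ) * r ^ (n - 1) := one_mul _
  have hg0 : Summable (fun n : ℕ => ab n * (0 : ℝ) ^ n) :=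
    summable_ab_pow hr0.le hr1 (by rw [abs_zero]; exact hr0.le)
  exact hasDerivAt_tsum_of_isPreconnected hu isOpen_Ioo (convex_Ioo _ _).isPreconnected
    hg hg' hmem hg0 hw

/-- The binomial series for `1/√(1-y)` on `[0,1)`. -/
lemma hasSum_ab_pow (y : ℝ) (h0 : 0 ≤ y) (h1 : y < 1) :
    HasSum (fun n : ℕ => ab n * y ^ n) (1 / Real.sqrt (1 - y)) := by
  set r : ℝ := (1 + y) / 2 with hr
  have hr0 : 0 < r := by rw [hr]; linarith
  have hyr : y < r := by rw [hr]; linarith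
  have hr1 : r < 1 := by rw [hr]; linarith
  set t : Set ℝ := Set.Ioo (-r) r with ht
  set H : ℝ → ℝ := fun w => ∑' n : ℕ, ab n * w ^ n with hH
  set D : ℝ → ℝ := fun w => ∑' n : ℕ, ab n * ((n : ℝ) * w ^ (n - 1)) with hD
  have habs : ∀ w ∈ t, |w| < r := fun w hw => abs_lt.mpr ⟨hw.1, hw.2⟩
  -- the functional identity H w = 2 (1 - w) D w
  have key : ∀ w ∈ t, H w = 2 * (1 - w) * D w := by
    intro w hw
    have hwr : |w| ≤ r := (habs w hw).le
    have hsD : Summable (fun n : ℕ => ab n * ((n : ℝ) * w ^ (n - 1))) := by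
      refine Summable.of_norm_bounded
        (summable_ab_deriv hr0 hr1 (le_of_eq (abs_of_pos hr0))) (fun n => ?_)
      rw [Real.norm_eq_abs, abs_mul, abs_mul, abs_of_pos (ab_pos n),
        abs_of_nonneg (Nat.cast_nonneg n : (0 : ℝ) ≤ n), abs_pow]
      calc ab n * ((n : ℝ) * |w| ^ (n - 1)) ≤ 1 * ((n : ℝ) * r ^ (n - 1)) := by
            apply mul_le_mul (ab_le_one n) _ (by positivity) (by norm_num)
            exact mul_le_mul_of_nonneg_left
              (pow_le_pow_left₀ (abs_nonneg w) hwr _) (Nat.cast_nonneg n)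
        _ = (n : ℝ) * r ^ (n - 1) := one_mul _
    have hDsum : HasSum (fun n : ℕ => ab n * ((n : ℝ) * w ^ (n - 1))) (D w) := hsD.hasSum
    have hD' : HasSum (fun m : ℕ => ab (m + 1) * (((m : ℝ) + 1) * w ^ m)) (D w) := by
      have h := (hasSum_nat_add_iff' (f := fun n : ℕ => ab n * ((n : ℝ) * w ^ (n - 1)))
        1).mpr hDsum
      simpa using h
    have h1 : HasSum (fun m : ℕ => 2 * (ab (m + 1) * (((m : ℝ) + 1) * w ^ m))) (2 * D w) :=
      hD'.mul_left 2
    have h2 : HasSum (fun m : ℕ => (2 * w) * (ab m * ((m : ℝ) * w ^ (m - 1))))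
        (2 * w * D w) := hDsum.mul_left (2 * w)
    have h3 := h1.sub h2
    have hfun : ∀ m : ℕ, 2 * (ab (m + 1) * (((m : ℝ) + 1) * w ^ m))
        - (2 * w) * (ab m * ((m : ℝ) * w ^ (m - 1))) = ab m * w ^ m := by
      intro m
      cases m with
      | zero =>
        have h := ab_rec 0
        norm_num at h ⊢
        linarith
      | succ k =>
        have hrec' := ab_rec (k + 1)
        push_cast at hrec' ⊢
        linear_combination w ^ (k + 1) * hrec'
    have h4 : HasSum (fun m : ℕ => ab m * w ^ m) (2 * D w - 2 * w * D w) := by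
      rwa [show (fun m : ℕ => 2 * (ab (m + 1) * (((m : ℝ) + 1) * w ^ m))
        - (2 * w) * (ab m * ((m : ℝ) * w ^ (m - 1)))) = fun m : ℕ => ab m * w ^ m
        from funext hfun] at h3
    calc H w = ∑' m : ℕ, ab m * w ^ m := rfl
      _ = 2 * D w - 2 * w * D w := h4.tsum_eq
      _ = 2 * (1 - w) * D w := by ring
  -- the function G is constant on [0, y]
  set G : ℝ → ℝ := fun w => (H w) ^ 2 * (1 - w) with hG
  have hsub : Set.Icc (0 : ℝ) y ⊆ t := fun w hw =>
    ⟨by linarith [hw.1], by linarith [hw.2]⟩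
  have hderiv : ∀ w ∈ t, HasDerivAt G 0 w := by
    intro w hw
    have hH' : HasDerivAt H (D w) w := hasDerivAt_ab_tsum hr0 hr1 hw
    have e1 : HasDerivAt (fun w => (H w) ^ 2) (2 * H w * D w) w := by
      have e := hH'.pow 2; simp at e; exact e
    have e2 : HasDerivAt (fun w : ℝ => 1 - w) (-1) w := (hasDerivAt_id w).const_sub 1
    have e3 := e1.mul e2
    have hz : 2 * H w * D w * (1 - w) + (H w) ^ 2 * (-1) = 0 := by
      have hk := key w hw
      linear_combination (-(H w)) * hk
    rwa [hz] at e3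
  have hconst : G y = G 0 := by
    have := constant_of_has_deriv_right_zero (f := G) (a := 0) (b := y)
      (fun w hw => ((hderiv w (hsub hw)).continuousAt).continuousWithinAt)
      (fun w hw => ((hderiv w (hsub ⟨hw.1, hw.2.le⟩)).hasDerivWithinAt))
    exact this y (Set.right_mem_Icc.mpr h0)
  have hH0 : H 0 = 1 := by
    show (∑' n : ℕ, ab n * (0 : ℝ) ^ n) = 1
    rw [tsum_eq_single 0 (fun n hn => by simp [zero_pow hn])]
    simp [ab, Nat.centralBinom]
  have hG0 : G 0 = 1 := by rw [hG]; simp [hH0]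
  have hGy : (H y) ^ 2 * (1 - y) = 1 := by
    have h := hconst; rw [hG0] at h; exact h
  have h1y : (0 : ℝ) < 1 - y := by linarith
  have hne : (1 : ℝ) - y ≠ 0 := h1y.ne'
  have hHsq : (H y) ^ 2 = 1 / (1 - y) := by
    field_simp
    linear_combination hGy
  have hHy0 : 0 ≤ H y :=
    tsum_nonneg (fun n => mul_nonneg (ab_pos n).le (pow_nonneg h0 n))
  have hHval : H y = 1 / Real.sqrt (1 - y) := by
    have h := (Real.sqrt_sq hHy0).symm
    rw [h, hHsq, one_div, one_div, Real.sqrt_inv]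
  have hsummy : Summable (fun n : ℕ => ab n * y ^ n) :=
    summable_ab_pow hr0.le hr1 (by rw [abs_of_nonneg h0]; exact hyr.le)
  have hfin := hsummy.hasSum
  rwa [show ∑' n : ℕ, ab n * y ^ n = 1 / Real.sqrt (1 - y) from hHval] at hfin

end Binomial

section Arcsin

lemma summable_arcsin_term {w r : ℝ} (hr0 : 0 ≤ r) (hr1 : r < 1) (hw : |w| ≤ r) :
    Summable (fun n : ℕ => ab n / (2 * (n : ℝ) + 1) * w ^ (2 * n + 1)) := by
  have hr2 : r ^ 2 < 1 := by nlinarith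
  have hsumg : Summable (fun n : ℕ => r * (r ^ 2) ^ n) :=
    (summable_geometric_of_lt_one (by positivity) hr2).mul_left r
  refine Summable.of_norm_bounded hsumg (fun n => ?_)
  have h21 : (0 : ℝ) < 2 * (n : ℝ) + 1 := by positivity
  rw [Real.norm_eq_abs, abs_mul, abs_div, abs_of_pos (ab_pos n), abs_of_pos h21, abs_pow]
  have hc : ab n / (2 * (n : ℝ) + 1) ≤ 1 := by
    rw [div_le_one h21]
    calc ab n ≤ 1 := ab_le_one n
      _ ≤ 2 * (n : ℝ) + 1 := by
          have hn := Nat.cast_nonneg (α := ℝ) n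
          linarith
  have hp : |w| ^ (2 * n + 1) ≤ r ^ (2 * n + 1) := pow_le_pow_left₀ (abs_nonneg w) hw _
  calc ab n / (2 * (n : ℝ) + 1) * |w| ^ (2 * n + 1) ≤ 1 * r ^ (2 * n + 1) :=
        mul_le_mul hc hp (by positivity) (by norm_num)
    _ = r * (r ^ 2) ^ n := by rw [one_mul, pow_succ, ← pow_mul, mul_comm 2 n, mul_comm]

lemma hasDerivAt_F {r : ℝ} (hr0 : 0 < r) (hr1 : r < 1) {w : ℝ}
    (hw : w ∈ Set.Ioo (-r) r) :
    HasDerivAt (fun y : ℝ => ∑' n : ℕ, ab n / (2 * (n : ℝ) + 1) * y ^ (2 * n + 1))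
      (∑' n : ℕ, ab n / (2 * (n : ℝ) + 1) * (((2 * n + 1 : ℕ) : ℝ) * w ^ (2 * n))) w := by
  have habs : ∀ y ∈ Set.Ioo (-r) r, |y| ≤ r := fun y hy => abs_le.mpr ⟨hy.1.le, hy.2.le⟩
  have hmem : (0 : ℝ) ∈ Set.Ioo (-r) r := ⟨by linarith, hr0⟩
  have hr2 : r ^ 2 < 1 := by nlinarith
  have hu : Summable (fun n : ℕ => (r ^ 2) ^ n) :=
    summable_geometric_of_lt_one (by positivity) hr2
  have hg : ∀ (n : ℕ) (y : ℝ), y ∈ Set.Ioo (-r) r →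
      HasDerivAt (fun y : ℝ => ab n / (2 * (n : ℝ) + 1) * y ^ (2 * n + 1))
        (ab n / (2 * (n : ℝ) + 1) * (((2 * n + 1 : ℕ) : ℝ) * y ^ (2 * n))) y :=
    fun n y _ => (hasDerivAt_pow (2 * n + 1) y).const_mul (ab n / (2 * (n : ℝ) + 1))
  have hg' : ∀ (n : ℕ) (y : ℝ), y ∈ Set.Ioo (-r) r →
      ‖ab n / (2 * (n : ℝ) + 1) * (((2 * n + 1 : ℕ) : ℝ) * y ^ (2 * n))‖ ≤ (r ^ 2) ^ n := by
    intro n y hy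
    have h21 : (0 : ℝ) < 2 * (n : ℝ) + 1 := by positivity
    have hcast : ((2 * n + 1 : ℕ) : ℝ) = 2 * (n : ℝ) + 1 := by push_cast; ring
    rw [Real.norm_eq_abs, abs_mul, abs_mul, abs_div, abs_of_pos (ab_pos n),
      abs_of_pos h21, hcast, abs_of_pos h21, abs_pow]
    have hkey : ab n / (2 * (n : ℝ) + 1) * ((2 * (n : ℝ) + 1) * |y| ^ (2 * n))
        = ab n * |y| ^ (2 * n) := by field_simp
    rw [hkey]
    calc ab n * |y| ^ (2 * n) ≤ 1 * r ^ (2 * n) :=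
          mul_le_mul (ab_le_one n)
            (pow_le_pow_left₀ (abs_nonneg y) (habs y hy) _)
            (by positivity) (by norm_num)
      _ = (r ^ 2) ^ n := by rw [one_mul, pow_mul]
  have hg0 : Summable (fun n : ℕ => ab n / (2 * (n : ℝ) + 1) * (0 : ℝ) ^ (2 * n + 1)) :=
    summable_arcsin_term hr0.le hr1 (by rw [abs_zero]; exact hr0.le)
  exact hasDerivAt_tsum_of_isPreconnected hu isOpen_Ioo (convex_Ioo _ _).isPreconnected
    hg hg' hmem hg0 hw

/-- Arcsin power series on `[0,1)`. -/
lemma hasSum_arcsin (x : ℝ) (h0 : 0 ≤ x) (h1 : x < 1) :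
    HasSum (fun n : ℕ => ab n / (2 * (n : ℝ) + 1) * x ^ (2 * n + 1)) (Real.arcsin x) := by
  set r : ℝ := (1 + x) / 2 with hrdef
  have hr0 : 0 < r := by rw [hrdef]; linarith
  have hxr : x < r := by rw [hrdef]; linarith
  have hr1 : r < 1 := by rw [hrdef]; linarith
  set t : Set ℝ := Set.Ioo (-r) r with ht
  set F : ℝ → ℝ := fun w => ∑' n : ℕ, ab n / (2 * (n : ℝ) + 1) * w ^ (2 * n + 1) with hF
  have habs : ∀ w ∈ t, |w| < r := fun w hw => abs_lt.mpr ⟨hw.1, hw.2⟩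
  have hFderiv : ∀ w ∈ t, HasDerivAt F (1 / Real.sqrt (1 - w ^ 2)) w := by
    intro w hw
    have hderiv := hasDerivAt_F hr0 hr1 hw
    have heq : (∑' n : ℕ, ab n / (2 * (n : ℝ) + 1) * (((2 * n + 1 : ℕ) : ℝ) * w ^ (2 * n)))
        = 1 / Real.sqrt (1 - w ^ 2) := by
      have hterm : ∀ n : ℕ,
          ab n / (2 * (n : ℝ) + 1) * (((2 * n + 1 : ℕ) : ℝ) * w ^ (2 * n))
            = ab n * (w ^ 2) ^ n := by
        intro n
        have h21 : (2 * (n : ℝ) + 1) ≠ 0 := by positivity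
        have hcast : ((2 * n + 1 : ℕ) : ℝ) = 2 * (n : ℝ) + 1 := by push_cast; ring
        rw [hcast, pow_mul]
        field_simp
      rw [tsum_congr hterm]
      have hw2lt : w ^ 2 < 1 := by
        have h := habs w hw
        nlinarith [abs_nonneg w, sq_abs w]
      exact (hasSum_ab_pow (w ^ 2) (sq_nonneg w) hw2lt).tsum_eq
    rwa [heq] at hderiv
  have harc : ∀ w ∈ t, HasDerivAt Real.arcsin (1 / Real.sqrt (1 - w ^ 2)) w := by
    intro w hw
    have h := habs w hw
    rw [abs_lt] at h
    exact Real.hasDerivAt_arcsin (by intro hc; rw [hc] at h; linarith [h.1])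
      (by intro hc; rw [hc] at h; linarith [h.2])
  set g : ℝ → ℝ := fun w => F w - Real.arcsin w with hg
  have hsub : Set.Icc (0 : ℝ) x ⊆ t := fun w hw =>
    ⟨by linarith [hw.1], by linarith [hw.2]⟩
  have hgderiv : ∀ w ∈ t, HasDerivAt g 0 w := by
    intro w hw
    have h := (hFderiv w hw).sub (harc w hw)
    simp at h; exact h
  have hconst : g x = g 0 := by
    have := constant_of_has_deriv_right_zero (f := g) (a := 0) (b := x)
      (fun w hw => ((hgderiv w (hsub hw)).continuousAt).continuousWithinAt)
      (fun w hw => ((hgderiv w (hsub ⟨hw.1, hw.2.le⟩)).hasDerivWithinAt))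
    exact this x (Set.right_mem_Icc.mpr h0)
  have hF0 : F 0 = 0 := by
    show (∑' n : ℕ, ab n / (2 * (n : ℝ) + 1) * (0 : ℝ) ^ (2 * n + 1)) = 0
    have hterm : ∀ n : ℕ, ab n / (2 * (n : ℝ) + 1) * (0 : ℝ) ^ (2 * n + 1) = 0 := by
      intro n; simp
    rw [tsum_congr hterm]; exact tsum_zero
  have hFx : F x = Real.arcsin x := by
    have h := hconst
    rw [hg] at h
    simp only [hF0, Real.arcsin_zero, sub_zero] at h
    linarith [h]
  have hsumm : Summable (fun n : ℕ => ab n / (2 * (n : ℝ) + 1) * x ^ (2 * n + 1)) :=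
    summable_arcsin_term hr0.le hr1 (by rw [abs_of_nonneg h0]; exact hxr.le)
  have hfin := hsumm.hasSum
  rwa [show ∑' n : ℕ, ab n / (2 * (n : ℝ) + 1) * x ^ (2 * n + 1) = Real.arcsin x from hFx]
    at hfin

/-- Endpoint: the arcsin series at `1` sums to `π/2`. -/
lemma hasSum_arcsin_one :
    HasSum (fun n : ℕ => ab n / (2 * (n : ℝ) + 1)) (π / 2) := by
  set c : ℕ → ℝ := fun n => ab n / (2 * (n : ℝ) + 1) with hc
  have hc0 : ∀ n, 0 ≤ c n := by
    intro n
    have h21 : (0 : ℝ) < 2 * (n : ℝ) + 1 := by positivity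
    exact le_of_lt (div_pos (ab_pos n) h21)
  have hIoo : Set.Ioo (0 : ℝ) 1 ∈ nhdsWithin (1 : ℝ) (Set.Iio 1) :=
    Ioo_mem_nhdsLT_of_mem ⟨one_pos, le_refl 1⟩
  have hbound : ∀ N, ∑ n ∈ Finset.range N, c n ≤ π / 2 := by
    intro N
    have hx : ∀ x ∈ Set.Ioo (0 : ℝ) 1,
        ∑ n ∈ Finset.range N, c n * x ^ (2 * n + 1) ≤ π / 2 := by
      intro x hxm
      have hs := hasSum_arcsin x hxm.1.le hxm.2
      calc ∑ n ∈ Finset.range N, c n * x ^ (2 * n + 1) ≤ Real.arcsin x :=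
            sum_le_hasSum _ (fun n _ => mul_nonneg (hc0 n) (pow_nonneg hxm.1.le _)) hs
        _ ≤ π / 2 := Real.arcsin_le_pi_div_two x
    have htend : Filter.Tendsto (fun x : ℝ => ∑ n ∈ Finset.range N, c n * x ^ (2 * n + 1))
        (nhdsWithin (1 : ℝ) (Set.Iio 1))
        (nhds (∑ n ∈ Finset.range N, c n)) := by
      have hcont : Continuous (fun x : ℝ => ∑ n ∈ Finset.range N, c n * x ^ (2 * n + 1)) := by
        continuity
      have h := hcont.tendsto (1 : ℝ)
      simp only [one_pow, mul_one] at h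
      exact h.mono_left nhdsWithin_le_nhds
    refine le_of_tendsto htend ?_
    filter_upwards [hIoo] with x hx2 using hx x hx2
  have hsumm : Summable c := summable_of_sum_range_le hc0 hbound
  have h1 : ∑' n, c n ≤ π / 2 := hsumm.tsum_le_of_sum_range_le hbound
  have h2 : π / 2 ≤ ∑' n, c n := by
    have harc : ∀ x ∈ Set.Ioo (0 : ℝ) 1, Real.arcsin x ≤ ∑' n, c n := by
      intro x hx
      have hs := hasSum_arcsin x hx.1.le hx.2
      rw [← hs.tsum_eq]
      apply Summable.tsum_le_tsum _ hs.summable hsumm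
      intro n
      calc c n * x ^ (2 * n + 1) ≤ c n * 1 :=
            mul_le_mul_of_nonneg_left
              (pow_le_one₀ hx.1.le hx.2.le) (hc0 n)
        _ = c n := mul_one _
    have htend : Filter.Tendsto Real.arcsin (nhdsWithin (1 : ℝ) (Set.Iio 1))
        (nhds (π / 2)) := by
      have h := Real.continuous_arcsin.tendsto (1 : ℝ)
      rw [Real.arcsin_one] at h
      exact h.mono_left nhdsWithin_le_nhds
    refine le_of_tendsto htend ?_
    filter_upwards [hIoo] with x hx using harc x hx
  have heq : ∑' n, c n = π / 2 := le_antisymm h1 h2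
  have hs := hsumm.hasSum
  rwa [heq] at hs

/-- Arcsin power series on `[0,1]`. -/
lemma hasSum_arcsin' (x : ℝ) (h0 : 0 ≤ x) (h1 : x ≤ 1) :
    HasSum (fun n : ℕ => ab n / (2 * (n : ℝ) + 1) * x ^ (2 * n + 1)) (Real.arcsin x) := by
  rcases eq_or_lt_of_le h1 with h | h
  · subst h
    simpa [Real.arcsin_one] using hasSum_arcsin_one
  · exact hasSum_arcsin x h0 h

end Arcsin

section DoubleFactorialFacts

lemma df_key (n : ℕ) : (2 * n + 1 - 2)‼ * 2 ^ n * n ! = (2 * n)! := by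
  cases n with
  | zero => decide
  | succ m =>
    have h1 : 2 * (m + 1) + 1 - 2 = 2 * m + 1 := by omega
    have hfac : (2 * (m + 1))! = (2 * m + 1 + 1)‼ * (2 * m + 1)‼ := by
      rw [show 2 * (m + 1) = 2 * m + 1 + 1 by omega]
      exact Nat.factorial_eq_mul_doubleFactorial (2 * m + 1)
    have h3 : (2 * m + 1 + 1)‼ = 2 ^ (m + 1) * (m + 1)! := by
      rw [show 2 * m + 1 + 1 = 2 * (m + 1) by omega, Nat.doubleFactorial_two_mul]
    rw [h1, hfac, h3]
    ring

lemma cb_fact (n : ℕ) : Nat.centralBinom n * n ! * n ! = (2 * n)! := by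
  have h := Nat.choose_mul_factorial_mul_factorial (show n ≤ 2 * n by omega)
  rw [Nat.centralBinom]
  simpa [Nat.two_mul, Nat.add_sub_cancel] using h

lemma df_key2 (n : ℕ) : (2 * n + 1 - 2)‼ * 2 ^ n = Nat.centralBinom n * n ! := by
  have h3 : (2 * n + 1 - 2)‼ * 2 ^ n * n ! = Nat.centralBinom n * n ! * n ! := by
    rw [df_key n, cb_fact n]
  exact Nat.eq_of_mul_eq_mul_right (Nat.factorial_pos n) h3

lemma df_key3 (n : ℕ) :
    ((2 * n + 1 - 2)‼) ^ 2 * 4 ^ n = Nat.centralBinom n * (2 * n)! := by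
  have h4 : (4 : ℕ) ^ n = 2 ^ n * 2 ^ n := by
    rw [← pow_add]
    rw [show (4 : ℕ) = 2 ^ 2 from rfl, ← pow_mul]
    congr 1
    omega
  calc ((2 * n + 1 - 2)‼) ^ 2 * 4 ^ n
      = ((2 * n + 1 - 2)‼ * 2 ^ n) * ((2 * n + 1 - 2)‼ * 2 ^ n) := by rw [h4]; ring
    _ = (Nat.centralBinom n * n !) * (Nat.centralBinom n * n !) := by rw [df_key2]
    _ = Nat.centralBinom n * (Nat.centralBinom n * n ! * n !) := by ring
    _ = Nat.centralBinom n * (2 * n)! := by rw [cb_fact]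

lemma coeff_eq (n : ℕ) :
    ((Nat.doubleFactorial (2 * n + 1 - 2) : ℝ)) ^ 2 / (Nat.factorial (2 * n + 1))
      = ab n / (2 * (n : ℝ) + 1) := by
  have hkey : (((2 * n + 1 - 2)‼ : ℕ) : ℝ) ^ 2 * 4 ^ n
      = (Nat.centralBinom n : ℝ) * (((2 * n)! : ℕ) : ℝ) := by
    exact_mod_cast df_key3 n
  have hfacR : (((2 * n + 1)! : ℕ) : ℝ) = (2 * (n : ℝ) + 1) * (((2 * n)! : ℕ) : ℝ) := by
    rw [Nat.factorial_succ]
    push_cast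
    ring
  rw [ab, hfacR]
  have h1 : (0 : ℝ) < (((2 * n)! : ℕ) : ℝ) := by exact_mod_cast Nat.factorial_pos (2 * n)
  have h2 : (0 : ℝ) < 2 * (n : ℝ) + 1 := by positivity
  have h3 : (0 : ℝ) < (4 : ℝ) ^ n := by positivity
  field_simp
  linear_combination hkey

end DoubleFactorialFacts

/-- Power series expansion of `arccos(1-2z)` on `[0,1]`:
`arccos(1-2z) = ∑_{r odd ≥ 1} 2 ((r-2)!!)² / r! · z^{r/2}`, indexing odd `r = 2n+1`
(note `(2·0+1-2)‼ = 0‼ = 1 = (-1)!!` by ℕ-subtraction, matching the convention). -/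
theorem arccos_one_sub_two_mul_series (z : ℝ) (hz : z ∈ Set.Icc (0 : ℝ) 1) :
    HasSum
      (fun n : ℕ =>
        2 * ((Nat.doubleFactorial (2 * n + 1 - 2) : ℝ)) ^ 2 / (Nat.factorial (2 * n + 1)) *
          z ^ (((2 * n + 1 : ℕ) : ℝ) / 2))
      (Real.arccos (1 - 2 * z)) := by
  obtain ⟨hz0, hz1⟩ := hz
  set x : ℝ := Real.sqrt z with hx
  have hx0 : 0 ≤ x := Real.sqrt_nonneg z
  have hx1 : x ≤ 1 := by
    rw [hx, show (1 : ℝ) = Real.sqrt 1 from (Real.sqrt_one).symm]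
    exact Real.sqrt_le_sqrt hz1
  have hxsq : x ^ 2 = z := Real.sq_sqrt hz0
  have harccos : Real.arccos (1 - 2 * z) = 2 * Real.arcsin x := by
    have hsin : Real.sin (Real.arcsin x) = x :=
      Real.sin_arcsin (by linarith) hx1
    have hcos : Real.cos (2 * Real.arcsin x) = 1 - 2 * z := by
      rw [Real.cos_two_mul, Real.cos_sq']
      rw [hsin, hxsq]
      ring
    have h0' : 0 ≤ 2 * Real.arcsin x := by
      have h := Real.arcsin_nonneg.mpr hx0
      linarith
    have h1' : 2 * Real.arcsin x ≤ π := by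
      have h := Real.arcsin_le_pi_div_two x
      linarith
    rw [← hcos, Real.arccos_cos h0' h1']
  rw [harccos]
  have h := (hasSum_arcsin' x hx0 hx1).mul_left 2
  have hterm : ∀ n : ℕ,
      2 * ((Nat.doubleFactorial (2 * n + 1 - 2) : ℝ)) ^ 2 / (Nat.factorial (2 * n + 1)) *
        z ^ (((2 * n + 1 : ℕ) : ℝ) / 2)
      = 2 * (ab n / (2 * (n : ℝ) + 1) * x ^ (2 * n + 1)) := by
    intro n
    have hpow : z ^ (((2 * n + 1 : ℕ) : ℝ) / 2) = x ^ (2 * n + 1) := by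
      rw [hx, Real.sqrt_eq_rpow, ← Real.rpow_natCast (z ^ ((1 : ℝ) / 2)) (2 * n + 1),
        ← Real.rpow_mul hz0]
      congr 1
      push_cast
      ring
    rw [hpow, show 2 * ((Nat.doubleFactorial (2 * n + 1 - 2) : ℝ)) ^ 2
        / (Nat.factorial (2 * n + 1))
      = 2 * (((Nat.doubleFactorial (2 * n + 1 - 2) : ℝ)) ^ 2 / (Nat.factorial (2 * n + 1)))
      from by ring, coeff_eq n]
    ring
  rw [show (fun n : ℕ =>
      2 * ((Nat.doubleFactorial (2 * n + 1 - 2) : ℝ)) ^ 2 / (Nat.factorial (2 * n + 1)) *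
        z ^ (((2 * n + 1 : ℕ) : ℝ) / 2))
    = (fun n : ℕ => 2 * (ab n / (2 * (n : ℝ) + 1) * x ^ (2 * n + 1))) from funext hterm]
  exact h
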